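/- Let d, n, T ≥ 1, let K ⊆ [0,1]^d be convex, let u ∈ K, and set α = (1 − ‖u‖_∞)/4. For each t ∈ {1,…,T} and j ∈ {1,…,n}, let f_t^j : ℝ^d → ℝ be continuous DR-submodular and nonnegative on X = [0,1]^d, differentiable on X with continuous gradient satisfying ‖∇f_t^j(x) − ∇f_t^j(y)‖ ≤ β‖x − y‖ for all x, y ∈ X, let x̂_t^j ∈ K, set x_t^j = (x̂_t^j + u)/2, and define g_t^j(x) = ∫_0^1 (1/(8(1 − z/2)^3)) · ∇f_t^j((z/2)(x − u) + u) dz. Then for every i ∈ {1,…,n} and every x ∈ K: α·Σ_{t=1}^T Σ_{j=1}^n f_t^j(x) − Σ_{t=1}^T Σ_{j=1}^n f_t^j(x_t^i) ≤ Σ_{t=1}^T Σ_{j=1}^n ⟨g_t^j(x̂_t^j), x − x̂_t^i⟩ + Σ_{t=1}^T Σ_{j=1}^n ⟨(1/2)·∇f_t^j(x_t^j) − g_t^j(x̂_t^j), x̂_t^j − x̂_t^i⟩ + (β/8)·Σ_{t=1}^T Σ_{j=1}^n ‖x̂_t^i − x̂_t^j‖². -/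

import Mathlib

open MeasureTheory Finset

noncomputable section

/-- The unit cube `[0,1]^d` in `ℝ^d` (with Euclidean structure). -/
def cube (d : ℕ) : Set (EuclideanSpace ℝ (Fin d)) :=
  {x | ∀ i, x i ∈ Set.Icc (0 : ℝ) 1}

/-- `f` is continuous DR-submodular on the unit cube `[0,1]^d`: for coordinatewise
comparable points `x ≤ y` in the cube and any feasible move of size `z ≥ 0` along a
coordinate direction, the gain at `x` dominates the gain at `y`. -/
def DRSubmodularOn (d : ℕ) (f : EuclideanSpace ℝ (Fin d) → ℝ) : Prop :=
  ∀ x y : EuclideanSpace ℝ (Fin d), x ∈ cube d → y ∈ cube d → (∀ i, x i ≤ y i) →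
    ∀ (j : Fin d) (z : ℝ), 0 ≤ z →
      x + z • EuclideanSpace.single j (1 : ℝ) ∈ cube d →
      y + z • EuclideanSpace.single j (1 : ℝ) ∈ cube d →
      f (y + z • EuclideanSpace.single j (1 : ℝ)) - f y ≤
        f (x + z • EuclideanSpace.single j (1 : ℝ)) - f x

section Aux
open Set

variable {d : ℕ}

local notation "E" => EuclideanSpace ℝ (Fin d)

lemma cube_convex : Convex ℝ (cube d) := by
  intro x hx y hy a b ha hb hab i
  have hxi := hx i; have hyi := hy i
  have : (a • x + b • y) i = a * x i + b * y i := by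
    simp [PiLp.add_apply, PiLp.smul_apply, smul_eq_mul]
  rw [this]
  constructor
  · nlinarith [mul_nonneg ha hxi.1, mul_nonneg hb hyi.1]
  · nlinarith [hxi.1, hxi.2, hyi.1, hyi.2]

lemma hasDerivWithinAt_path (f : E → ℝ) (f' : E → E)
    (hgrad : ∀ x ∈ cube d, HasGradientWithinAt f (f' x) (cube d) x)
    (a v : E) (s : Set ℝ) (hs : ∀ t ∈ s, a + t • v ∈ cube d) (t : ℝ) (ht : t ∈ s) :
    HasDerivWithinAt (fun t => f (a + t • v)) (inner ℝ (f' (a + t • v)) v : ℝ) s t := by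
  have hγ : HasDerivWithinAt (fun t : ℝ => a + t • v) v s t := by
    simpa using ((hasDerivWithinAt_id t s).smul_const v).const_add a
  have := (hgrad _ (hs t ht)).hasFDerivWithinAt.comp_hasDerivWithinAt t hγ (fun r hr => hs r hr)
  exact this


lemma single_coord_add (x : E) (z : ℝ) (j i : Fin d) :
    (x + z • EuclideanSpace.single j (1:ℝ)) i = x i + (if i = j then z else 0) := by
  rcases eq_or_ne i j with hij | hij
  · subst hij; simp [PiLp.add_apply, PiLp.smul_apply, EuclideanSpace.single_apply]
  · simp [PiLp.add_apply, PiLp.smul_apply, EuclideanSpace.single_apply, hij]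

lemma inner_single_coord (w : E) (j : Fin d) :
    (inner ℝ w (EuclideanSpace.single j (1:ℝ)) : ℝ) = w j := by
  simp [PiLp.inner_apply, EuclideanSpace.single_apply, mul_comm]

-- right-difference antitone
lemma grad_anti_right (f : E → ℝ) (f' : E → E)
    (hsub : DRSubmodularOn d f)
    (hgrad : ∀ x ∈ cube d, HasGradientWithinAt f (f' x) (cube d) x)
    (x y : E) (hx : x ∈ cube d) (hy : y ∈ cube d) (hxy : ∀ i, x i ≤ y i)
    (j : Fin d) (hyj : y j < 1) :
    f' y j ≤ f' x j := by
  set δ : ℝ := 1 - y j with hδ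
  have hδpos : 0 < δ := by linarith
  have hmemx : ∀ z ∈ Icc (0:ℝ) δ, x + z • EuclideanSpace.single j (1:ℝ) ∈ cube d := by
    intro z hz i
    rw [single_coord_add]
    have hxi := hx i
    rcases eq_or_ne i j with hij | hij
    · subst hij; rw [if_pos rfl]
      exact ⟨by linarith [hxi.1, hz.1], by linarith [hxy i, hz.2]⟩
    · rw [if_neg hij, add_zero]; exact hxi
  have hmemy : ∀ z ∈ Icc (0:ℝ) δ, y + z • EuclideanSpace.single j (1:ℝ) ∈ cube d := by
    intro z hz i
    rw [single_coord_add]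
    have hyi := hy i
    rcases eq_or_ne i j with hij | hij
    · subst hij; rw [if_pos rfl]
      exact ⟨by linarith [hyi.1, hz.1], by linarith [hz.2]⟩
    · rw [if_neg hij, add_zero]; exact hyi
  have hdx : HasDerivWithinAt (fun z => f (x + z • EuclideanSpace.single j (1:ℝ)))
      (f' x j) (Icc (0:ℝ) δ) 0 := by
    have := hasDerivWithinAt_path f f' hgrad x (EuclideanSpace.single j (1:ℝ))
      (Icc (0:ℝ) δ) hmemx 0 ⟨le_refl 0, le_of_lt hδpos⟩
    rw [inner_single_coord] at this; simpa using this
  have hdy : HasDerivWithinAt (fun z => f (y + z • EuclideanSpace.single j (1:ℝ)))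
      (f' y j) (Icc (0:ℝ) δ) 0 := by
    have := hasDerivWithinAt_path f f' hgrad y (EuclideanSpace.single j (1:ℝ))
      (Icc (0:ℝ) δ) hmemy 0 ⟨le_refl 0, le_of_lt hδpos⟩
    rw [inner_single_coord] at this; simpa using this
  have hset : Icc (0:ℝ) δ \ {0} = Ioc 0 δ := by
    ext z
    simp only [Set.mem_diff, Set.mem_Icc, Set.mem_Ioc, Set.mem_singleton_iff]
    constructor
    · rintro ⟨⟨h1, h2⟩, h3⟩; exact ⟨lt_of_le_of_ne h1 (Ne.symm h3), h2⟩
    · rintro ⟨h1, h2⟩; exact ⟨⟨le_of_lt h1, h2⟩, ne_of_gt h1⟩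
  have hfilt : nhdsWithin (0:ℝ) (Icc 0 δ \ {0}) = nhdsWithin 0 (Ioi 0) := by
    rw [hset]; exact nhdsWithin_Ioc_eq_nhdsGT hδpos
  have htx := hasDerivWithinAt_iff_tendsto_slope.1 hdx
  have hty := hasDerivWithinAt_iff_tendsto_slope.1 hdy
  rw [hfilt] at htx hty
  refine le_of_tendsto_of_tendsto hty htx ?_
  filter_upwards [Ioo_mem_nhdsGT_of_mem (Set.left_mem_Ico.2 hδpos)] with z hz
  have hz0 : 0 < z := hz.1
  have hzδ : z ≤ δ := le_of_lt hz.2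
  have key := hsub x y hx hy hxy j z (le_of_lt hz0) (hmemx z ⟨le_of_lt hz0, hzδ⟩)
    (hmemy z ⟨le_of_lt hz0, hzδ⟩)
  show slope _ 0 z ≤ slope _ 0 z
  rw [slope_def_field, slope_def_field]
  have h2 : (0:ℝ) < z - 0 := by linarith
  rw [div_le_div_iff_of_pos_right h2]
  simpa using key

-- left-difference antitone
lemma grad_anti_left (f : E → ℝ) (f' : E → E)
    (hsub : DRSubmodularOn d f)
    (hgrad : ∀ x ∈ cube d, HasGradientWithinAt f (f' x) (cube d) x)
    (x y : E) (hx : x ∈ cube d) (hy : y ∈ cube d) (hxy : ∀ i, x i ≤ y i)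
    (j : Fin d) (hxj : 0 < x j) :
    f' y j ≤ f' x j := by
  set δ : ℝ := x j with hδ
  have hδpos : 0 < δ := hxj
  have hmemx : ∀ z ∈ Icc (-δ) (0:ℝ), x + z • EuclideanSpace.single j (1:ℝ) ∈ cube d := by
    intro z hz i
    rw [single_coord_add]
    have hxi := hx i
    rcases eq_or_ne i j with hij | hij
    · subst hij; rw [if_pos rfl]
      exact ⟨by linarith [hz.1], by linarith [hxi.2, hz.2]⟩
    · rw [if_neg hij, add_zero]; exact hxi
  have hmemy : ∀ z ∈ Icc (-δ) (0:ℝ), y + z • EuclideanSpace.single j (1:ℝ) ∈ cube d := by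
    intro z hz i
    rw [single_coord_add]
    have hyi := hy i
    rcases eq_or_ne i j with hij | hij
    · subst hij; rw [if_pos rfl]
      exact ⟨by linarith [hxy i, hz.1], by linarith [hyi.2, hz.2]⟩
    · rw [if_neg hij, add_zero]; exact hyi
  have hdx : HasDerivWithinAt (fun z => f (x + z • EuclideanSpace.single j (1:ℝ)))
      (f' x j) (Icc (-δ) (0:ℝ)) 0 := by
    have := hasDerivWithinAt_path f f' hgrad x (EuclideanSpace.single j (1:ℝ))
      (Icc (-δ) (0:ℝ)) hmemx 0 ⟨by linarith, le_refl 0⟩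
    rw [inner_single_coord] at this; simpa using this
  have hdy : HasDerivWithinAt (fun z => f (y + z • EuclideanSpace.single j (1:ℝ)))
      (f' y j) (Icc (-δ) (0:ℝ)) 0 := by
    have := hasDerivWithinAt_path f f' hgrad y (EuclideanSpace.single j (1:ℝ))
      (Icc (-δ) (0:ℝ)) hmemy 0 ⟨by linarith, le_refl 0⟩
    rw [inner_single_coord] at this; simpa using this
  have hset : Icc (-δ) (0:ℝ) \ {0} = Ico (-δ) 0 := by
    ext z
    simp only [Set.mem_diff, Set.mem_Icc, Set.mem_Ico, Set.mem_singleton_iff]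
    constructor
    · rintro ⟨⟨h1, h2⟩, h3⟩; exact ⟨h1, lt_of_le_of_ne h2 h3⟩
    · rintro ⟨h1, h2⟩; exact ⟨⟨h1, le_of_lt h2⟩, ne_of_lt h2⟩
  have hfilt : nhdsWithin (0:ℝ) (Icc (-δ) 0 \ {0}) = nhdsWithin 0 (Iio 0) := by
    rw [hset]; exact nhdsWithin_Ico_eq_nhdsLT (by linarith)
  have htx := hasDerivWithinAt_iff_tendsto_slope.1 hdx
  have hty := hasDerivWithinAt_iff_tendsto_slope.1 hdy
  rw [hfilt] at htx hty
  refine le_of_tendsto_of_tendsto hty htx ?_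
  filter_upwards [Ioo_mem_nhdsLT_of_mem (by constructor <;> linarith : (0:ℝ) ∈ Set.Ioc (-δ) 0)]
    with z hz
  have hz0 : z < 0 := hz.2
  have hzδ : -δ ≤ z := le_of_lt hz.1
  have hmx := hmemx z ⟨hzδ, le_of_lt hz0⟩
  have hmy := hmemy z ⟨hzδ, le_of_lt hz0⟩
  have hxy' : ∀ i, (x + z • EuclideanSpace.single j (1:ℝ)) i ≤
      (y + z • EuclideanSpace.single j (1:ℝ)) i := by
    intro i; rw [single_coord_add, single_coord_add]
    have := hxy i; rcases eq_or_ne i j with hij | hij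
    · subst hij; simp only [if_pos rfl]; linarith
    · simp only [if_neg hij]; linarith
  have hback : ∀ w : E, w + z • EuclideanSpace.single j (1:ℝ) +
      (-z) • EuclideanSpace.single j (1:ℝ) = w := by
    intro w; rw [add_assoc, ← add_smul]; simp
  have key := hsub (x + z • EuclideanSpace.single j (1:ℝ))
    (y + z • EuclideanSpace.single j (1:ℝ)) hmx hmy hxy' j (-z) (by linarith)
    (by rw [hback]; exact hx) (by rw [hback]; exact hy)
  rw [hback, hback] at key
  show slope _ 0 z ≤ slope _ 0 z
  rw [slope_def_field, slope_def_field]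
  have h2 : z - 0 < 0 := by linarith
  rw [div_le_div_right_of_neg h2]
  simp only [zero_smul, add_zero]
  linarith

-- combined antitone
lemma grad_anti (f : E → ℝ) (f' : E → E)
    (hsub : DRSubmodularOn d f)
    (hgrad : ∀ x ∈ cube d, HasGradientWithinAt f (f' x) (cube d) x)
    (x y : E) (hx : x ∈ cube d) (hy : y ∈ cube d) (hxy : ∀ i, x i ≤ y i)
    (j : Fin d) :
    f' y j ≤ f' x j := by
  by_cases h1 : y j < 1
  · exact grad_anti_right f f' hsub hgrad x y hx hy hxy j h1
  by_cases h2 : 0 < x j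
  · exact grad_anti_left f f' hsub hgrad x y hx hy hxy j h2
  -- x j = 0, y j = 1 : use midpoint
  push_neg at h1 h2
  have hyj : y j = 1 := le_antisymm (hy j).2 h1
  have hxj : x j = 0 := le_antisymm h2 (hx j).1
  set m : E := (2:ℝ)⁻¹ • (x + y) with hm
  have hmmem : m ∈ cube d := by
    have := cube_convex hx hy (by norm_num : (0:ℝ) ≤ (2:ℝ)⁻¹)
      (by norm_num : (0:ℝ) ≤ (2:ℝ)⁻¹) (by norm_num)
    rw [hm, smul_add]; exact this
  have hmapp : ∀ i, m i = 2⁻¹ * (x i + y i) := by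
    intro i; simp only [hm, PiLp.smul_apply, PiLp.add_apply, smul_eq_mul]
  have hxm : ∀ i, x i ≤ m i := by
    intro i; rw [hmapp]; have := hxy i; linarith
  have hmy : ∀ i, m i ≤ y i := by
    intro i; rw [hmapp]; have := hxy i; linarith
  have hmj : m j = 2⁻¹ := by rw [hmapp, hxj, hyj]; norm_num
  have h1 : f' m j ≤ f' x j :=
    grad_anti_right f f' hsub hgrad x m hx hmmem hxm j (by rw [hmj]; norm_num)
  have h2 : f' y j ≤ f' m j :=
    grad_anti_left f f' hsub hgrad m y hmmem hy hmy j (by rw [hmj]; norm_num)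
  linarith

lemma grad_anti_dir (f : E → ℝ) (f' : E → E)
    (hsub : DRSubmodularOn d f)
    (hgrad : ∀ x ∈ cube d, HasGradientWithinAt f (f' x) (cube d) x)
    (a b v : E) (ha : a ∈ cube d) (hb : b ∈ cube d) (hab : ∀ i, a i ≤ b i)
    (hv : ∀ i, 0 ≤ v i) :
    (inner ℝ (f' b) v : ℝ) ≤ inner ℝ (f' a) v := by
  rw [PiLp.inner_apply, PiLp.inner_apply]
  simp only [RCLike.inner_apply', conj_trivial]
  apply Finset.sum_le_sum
  intro i _
  exact mul_le_mul_of_nonneg_right (grad_anti f f' hsub hgrad a b ha hb hab i) (hv i)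

lemma path_mem (a v : E) (ha : a ∈ cube d) (hav : a + v ∈ cube d) :
    ∀ t ∈ Icc (0:ℝ) 1, a + t • v ∈ cube d := by
  intro t ht
  have := cube_convex.add_smul_sub_mem ha hav ht
  simpa using this

lemma first_order (f : E → ℝ) (f' : E → E)
    (hsub : DRSubmodularOn d f)
    (hgrad : ∀ x ∈ cube d, HasGradientWithinAt f (f' x) (cube d) x)
    (a v : E) (ha : a ∈ cube d) (hav : a + v ∈ cube d)
    (hsign : (∀ i, 0 ≤ v i) ∨ (∀ i, v i ≤ 0)) :
    f (a + v) - f a ≤ inner ℝ (f' a) v := by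
  have hmem := path_mem a v ha hav
  have hpath := fun t ht => hasDerivWithinAt_path f f' hgrad a v (Icc (0:ℝ) 1) hmem t ht
  have hcont : ContinuousOn (fun t => f (a + t • v)) (Icc (0:ℝ) 1) :=
    fun t ht => (hpath t ht).continuousWithinAt
  have hderiv : ∀ t ∈ Ioo (0:ℝ) 1, HasDerivAt (fun t => f (a + t • v))
      (inner ℝ (f' (a + t • v)) v : ℝ) t := by
    intro t ht
    exact (hpath t (Ioo_subset_Icc_self ht)).hasDerivAt
      (Icc_mem_nhds ht.1 ht.2)
  obtain ⟨ξ, hξ, hslope⟩ := exists_hasDerivAt_eq_slope (fun t => f (a + t • v))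
    (fun t => (inner ℝ (f' (a + t • v)) v : ℝ)) one_pos hcont hderiv
  have h1 : f (a + v) - f a = (inner ℝ (f' (a + ξ • v)) v : ℝ) := by
    rw [hslope]; simp
  rw [h1]
  rcases hsign with hv | hv
  · apply grad_anti_dir f f' hsub hgrad a (a + ξ • v) v ha
      (hmem ξ (Ioo_subset_Icc_self hξ)) _ hv
    intro i
    simp only [PiLp.add_apply, PiLp.smul_apply, smul_eq_mul]
    nlinarith [hv i, hξ.1.le]
  · have := grad_anti_dir f f' hsub hgrad (a + ξ • v) a (-v)
      (hmem ξ (Ioo_subset_Icc_self hξ)) ha ?_ ?_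
    · rw [inner_neg_right, inner_neg_right] at this; linarith
    · intro i
      simp only [PiLp.add_apply, PiLp.smul_apply, smul_eq_mul]
      nlinarith [hv i, hξ.1.le]
    · intro i; simp only [PiLp.neg_apply]; linarith [hv i]

lemma cross_bound (f : E → ℝ) (f' : E → E)
    (hsub : DRSubmodularOn d f)
    (hgrad : ∀ x ∈ cube d, HasGradientWithinAt f (f' x) (cube d) x)
    (a b : E) (ha : a ∈ cube d) (hb : b ∈ cube d) :
    f ((WithLp.toLp 2 (fun i => max (a i) (b i)) : EuclideanSpace ℝ (Fin d)))
      + f ((WithLp.toLp 2 (fun i => min (a i) (b i)) : EuclideanSpace ℝ (Fin d))) - 2 * f a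
      ≤ inner ℝ (f' a) (b - a) := by
  set s : E := (WithLp.toLp 2 (fun i => max (a i) (b i)) : EuclideanSpace ℝ (Fin d)) with hs
  set m : E := (WithLp.toLp 2 (fun i => min (a i) (b i)) : EuclideanSpace ℝ (Fin d)) with hm
  have hsmem : s ∈ cube d := fun i => ⟨le_max_of_le_left (ha i).1,
    max_le (ha i).2 (hb i).2⟩
  have hmmem : m ∈ cube d := fun i => ⟨le_min (ha i).1 (hb i).1,
    min_le_of_left_le (ha i).2⟩
  have h1 : f s - f a ≤ inner ℝ (f' a) (s - a) := by
    have := first_order f f' hsub hgrad a (s - a) ha (by simpa using hsmem)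
      (Or.inl fun i => by simp only [PiLp.sub_apply]; exact sub_nonneg.2 (le_max_left _ _))
    simpa using this
  have h2 : f m - f a ≤ inner ℝ (f' a) (m - a) := by
    have := first_order f f' hsub hgrad a (m - a) ha (by simpa using hmmem)
      (Or.inr fun i => by simp only [PiLp.sub_apply]; exact sub_nonpos.2 (min_le_left _ _))
    simpa using this
  have hsum : (s - a) + (m - a) = b - a := by
    ext i
    show (s i - a i) + (m i - a i) = b i - a i
    have : s i + m i = a i + b i := max_add_min _ _
    linarith
  have : (inner ℝ (f' a) (s - a) : ℝ) + inner ℝ (f' a) (m - a) = inner ℝ (f' a) (b - a) := by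
    rw [← inner_add_right, hsum]
  linarith

lemma sup_lower (f : E → ℝ) (f' : E → E)
    (hsub : DRSubmodularOn d f)
    (hgrad : ∀ x ∈ cube d, HasGradientWithinAt f (f' x) (cube d) x)
    (hnonneg : ∀ x ∈ cube d, 0 ≤ f x)
    (a b : E) (ha : a ∈ cube d) (hb : b ∈ cube d)
    (M : ℝ) (hM0 : 0 ≤ M) (hM1 : M ≤ 1) (haM : ∀ i, a i ≤ M) :
    (1 - M) * f b ≤ f ((WithLp.toLp 2 (fun i => max (a i) (b i)) : EuclideanSpace ℝ (Fin d))) := by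
  set s : E := (WithLp.toLp 2 (fun i => max (a i) (b i)) : EuclideanSpace ℝ (Fin d)) with hs
  have hsmem : s ∈ cube d := fun i => ⟨le_max_of_le_left (ha i).1,
    max_le (ha i).2 (hb i).2⟩
  rcases eq_or_lt_of_le hM1 with hM1' | hM1'
  · rw [← hM1']; simp only [sub_self, zero_mul]; exact hnonneg s hsmem
  rcases eq_or_lt_of_le hM0 with hM0' | hM0'
  · have hsb : s = b := by
      ext i
      show max (a i) (b i) = b i
      exact max_eq_right (le_trans (haM i) (by rw [← hM0']; exact (hb i).1))
    rw [hsb]; nlinarith [hnonneg b hb]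
  -- 0 < M < 1
  set v : E := s - b with hv
  have hv0 : ∀ i, 0 ≤ v i := fun i => by
    simp only [hv, PiLp.sub_apply]; exact sub_nonneg.2 (le_max_right _ _)
  have hvM : ∀ i, v i ≤ M * (1 - b i) := by
    intro i
    simp only [hv, PiLp.sub_apply]
    rcases max_cases (a i) (b i) with ⟨h1, h2⟩ | ⟨h1, h2⟩
    · show max (a i) (b i) - b i ≤ _
      rw [h1]
      nlinarith [haM i, (hb i).2, (hb i).1]
    · show max (a i) (b i) - b i ≤ _
      rw [h1]
      nlinarith [(hb i).2]
  have hMinv : 1 < 1 / M := one_lt_one_div hM0' hM1'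
  have hmem : ∀ t ∈ Icc (0:ℝ) (1/M), b + t • v ∈ cube d := by
    intro t ht i
    simp only [PiLp.add_apply, PiLp.smul_apply, smul_eq_mul]
    constructor
    · nlinarith [(hb i).1, ht.1, hv0 i]
    · have h1 : t * v i ≤ (1/M) * (M * (1 - b i)) := by
        apply mul_le_mul ht.2 (hvM i) (hv0 i) (by positivity)
      have h2 : (1/M) * (M * (1 - b i)) = 1 - b i := by
        field_simp
      linarith
  have hpath := fun t ht => hasDerivWithinAt_path f f' hgrad b v (Icc (0:ℝ) (1/M)) hmem t ht
  have hcont : ContinuousOn (fun t => f (b + t • v)) (Icc (0:ℝ) (1/M)) :=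
    fun t ht => (hpath t ht).continuousWithinAt
  have hderiv : ∀ t ∈ Ioo (0:ℝ) (1/M), HasDerivAt (fun t => f (b + t • v))
      (inner ℝ (f' (b + t • v)) v : ℝ) t := fun t ht =>
    (hpath t (Ioo_subset_Icc_self ht)).hasDerivAt (Icc_mem_nhds ht.1 ht.2)
  obtain ⟨ξ₁, hξ₁, hs₁⟩ := exists_hasDerivAt_eq_slope (fun t => f (b + t • v))
    (fun t => (inner ℝ (f' (b + t • v)) v : ℝ)) one_pos
    (hcont.mono (Icc_subset_Icc le_rfl (le_of_lt hMinv)))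
    (fun t ht => hderiv t ⟨ht.1, lt_trans ht.2 hMinv⟩)
  obtain ⟨ξ₂, hξ₂, hs₂⟩ := exists_hasDerivAt_eq_slope (fun t => f (b + t • v))
    (fun t => (inner ℝ (f' (b + t • v)) v : ℝ)) hMinv
    (hcont.mono (Icc_subset_Icc (by linarith) le_rfl))
    (fun t ht => hderiv t ⟨lt_trans one_pos ht.1, ht.2⟩)
  have hξc : (inner ℝ (f' (b + ξ₂ • v)) v : ℝ) ≤ inner ℝ (f' (b + ξ₁ • v)) v := by
    apply grad_anti_dir f f' hsub hgrad (b + ξ₁ • v) (b + ξ₂ • v) v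
      (hmem ξ₁ ⟨hξ₁.1.le, le_trans hξ₁.2.le (le_of_lt hMinv)⟩)
      (hmem ξ₂ ⟨by linarith [hξ₂.1], hξ₂.2.le⟩) _ hv0
    intro i
    simp only [PiLp.add_apply, PiLp.smul_apply, smul_eq_mul]
    nlinarith [hv0 i, hξ₁.2, hξ₂.1]
  have hfsv : b + (1:ℝ) • v = s := by
    ext i
    show b i + 1 * (s i - b i) = s i
    ring
  have hnn : 0 ≤ f (b + (1/M) • v) := hnonneg _ (hmem _ ⟨by positivity, le_rfl⟩)
  have e1 : f (b + (1:ℝ) • v) - f (b + (0:ℝ) • v) = inner ℝ (f' (b + ξ₁ • v)) v := by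
    rw [hs₁]; simp
  have e2 : (inner ℝ (f' (b + ξ₂ • v)) v : ℝ) =
      (f (b + (1/M) • v) - f (b + (1:ℝ) • v)) / (1/M - 1) := hs₂
  rw [hfsv] at e1
  have h0 : f (b + (0:ℝ) • v) = f b := by simp
  rw [h0] at e1
  have hden : 0 < 1/M - 1 := by linarith
  have key : (f (b + (1/M) • v) - f s) / (1/M - 1) ≤ f s - f b := by
    rw [e1]
    calc (f (b + (1/M) • v) - f s) / (1/M - 1)
        = (inner ℝ (f' (b + ξ₂ • v)) v : ℝ) := by rw [e2, hfsv]
      _ ≤ _ := hξc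
  rw [div_le_iff₀ hden] at key
  have h3 := mul_le_mul_of_nonneg_left key hM0
  have h4 : M * ((f s - f b) * (1/M - 1)) = (f s - f b) * (1 - M) := by
    field_simp
  nlinarith [h3, h4, mul_nonneg hM0 hnn]

lemma smooth_lower (f : E → ℝ) (f' : E → E) (β : ℝ)
    (hgrad : ∀ x ∈ cube d, HasGradientWithinAt f (f' x) (cube d) x)
    (hcont : ContinuousOn f' (cube d))
    (hlip : ∀ x ∈ cube d, ∀ y ∈ cube d, ‖f' x - f' y‖ ≤ β * ‖x - y‖)
    (a b : E) (ha : a ∈ cube d) (hb : b ∈ cube d) :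
    f a + inner ℝ (f' a) (b - a) - (β/2) * ‖b - a‖^2 ≤ f b := by
  set v : E := b - a with hv
  have hab : a + v = b := by simp [hv]
  have hmem : ∀ t ∈ Icc (0:ℝ) 1, a + t • v ∈ cube d := path_mem a v ha (by rw [hab]; exact hb)
  have hpath := fun t ht => hasDerivWithinAt_path f f' hgrad a v (Icc (0:ℝ) 1) hmem t ht
  have hφcont : ContinuousOn (fun t => f (a + t • v)) (Icc (0:ℝ) 1) :=
    fun t ht => (hpath t ht).continuousWithinAt
  have hγcont : Continuous (fun t : ℝ => a + t • v) :=
    continuous_const.add (continuous_id.smul continuous_const)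
  have hφ'cont : ContinuousOn (fun t => (inner ℝ (f' (a + t • v)) v : ℝ)) (Icc (0:ℝ) 1) := by
    apply ContinuousOn.inner
    · exact hcont.comp hγcont.continuousOn (fun t ht => hmem t ht)
    · exact continuousOn_const
  have hφ'int : IntervalIntegrable (fun t => (inner ℝ (f' (a + t • v)) v : ℝ)) volume 0 1 := by
    apply ContinuousOn.intervalIntegrable
    rwa [Set.uIcc_of_le (by norm_num : (0:ℝ) ≤ 1)]
  have hftc : ∫ t in (0:ℝ)..1, (inner ℝ (f' (a + t • v)) v : ℝ) =
      f (a + (1:ℝ) • v) - f (a + (0:ℝ) • v) := by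
    apply intervalIntegral.integral_eq_sub_of_hasDeriv_right_of_le (by norm_num) hφcont
      (fun t ht => ((hpath t (Ioo_subset_Icc_self ht)).hasDerivAt
        (Icc_mem_nhds ht.1 ht.2)).hasDerivWithinAt) hφ'int
  have hlb : ∀ t ∈ Icc (0:ℝ) 1,
      (inner ℝ (f' a) v : ℝ) - β * t * ‖v‖^2 ≤ (inner ℝ (f' (a + t • v)) v : ℝ) := by
    intro t ht
    have h1 : (inner ℝ (f' a) v : ℝ) - (inner ℝ (f' (a + t • v)) v : ℝ) =
        inner ℝ (f' a - f' (a + t • v)) v := by rw [inner_sub_left]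
    have h2 : (inner ℝ (f' a - f' (a + t • v)) v : ℝ) ≤ ‖f' a - f' (a + t • v)‖ * ‖v‖ :=
      real_inner_le_norm _ _
    have h3 : ‖f' a - f' (a + t • v)‖ ≤ β * ‖a - (a + t • v)‖ :=
      hlip a ha _ (hmem t ht)
    have h4 : ‖a - (a + t • v)‖ = t * ‖v‖ := by
      rw [show a - (a + t • v) = -(t • v) by abel]
      rw [norm_neg, norm_smul, Real.norm_eq_abs, abs_of_nonneg ht.1]
    have h5 : ‖f' a - f' (a + t • v)‖ * ‖v‖ ≤ β * t * ‖v‖^2 := by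
      rw [h4] at h3
      calc ‖f' a - f' (a + t • v)‖ * ‖v‖ ≤ (β * (t * ‖v‖)) * ‖v‖ :=
            mul_le_mul_of_nonneg_right h3 (norm_nonneg v)
        _ = β * t * ‖v‖^2 := by ring
    linarith [h1 ▸ h2]
  have hrhsint : IntervalIntegrable (fun t => (inner ℝ (f' a) v : ℝ) - β * t * ‖v‖^2) volume 0 1 := by
    exact (Continuous.continuousOn (by fun_prop)).intervalIntegrable
  have hmono := intervalIntegral.integral_mono_on (by norm_num : (0:ℝ) ≤ 1) hrhsint hφ'int hlb
  have hrhs : ∫ t in (0:ℝ)..1, ((inner ℝ (f' a) v : ℝ) - β * t * ‖v‖^2) =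
      (inner ℝ (f' a) v : ℝ) - (β/2) * ‖v‖^2 := by
    rw [intervalIntegral.integral_sub (intervalIntegrable_const)
      ((Continuous.continuousOn (by fun_prop)).intervalIntegrable)]
    simp only [intervalIntegral.integral_const, smul_eq_mul, one_mul, sub_zero]
    have : ∫ t in (0:ℝ)..1, β * t * ‖v‖^2 = (β * ‖v‖^2) * ∫ t in (0:ℝ)..1, t := by
      rw [← intervalIntegral.integral_const_mul]
      congr 1; funext t; ring
    rw [this, integral_id]
    ring
  rw [hrhs, hftc] at hmono
  simp only [one_smul, zero_smul, add_zero] at hmono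
  rw [hab] at hmono
  linarith

lemma Dval (c A B : ℝ) (hc : c ≠ 0) :
    A / (4 * c^3) + B / (4 * c^2)
      = B * (4 * c^2)⁻¹ +
        A * (-(4 * (((2:ℕ):ℝ) * c^(2-1) * -(1/2))) / (4 * c^2)^2) := by
  field_simp
  ring

lemma I1val (c : ℝ) (h : c ≠ 0) :
    1 / (8 * c^2) = -(4 * -(1/2)) / (4*c)^2 := by
  field_simp
  ring

lemma lb_eq (c A B FX nu : ℝ) (hc : c ≠ 0) :
    (1 - nu) * FX * (1 / (8 * c^2)) - (A / (4*c^3) + B/(4*c^2))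
      = (1 / (8*c^3)) * (c * (1-nu) * FX - 2*A - (2*c)*B) := by
  field_simp
  ring

set_option maxHeartbeats 3200000 in
lemma boosting (K : Set E) (hKcvx : Convex ℝ K) (hKX : K ⊆ cube d)
    (u : E) (hu : u ∈ K) (ν : ℝ) (hν0 : 0 ≤ ν) (hν1 : ν ≤ 1) (huν : ∀ i, u i ≤ ν)
    (f : E → ℝ) (f' : E → E)
    (hsub : DRSubmodularOn d f)
    (hnonneg : ∀ x ∈ cube d, 0 ≤ f x)
    (hgrad : ∀ x ∈ cube d, HasGradientWithinAt f (f' x) (cube d) x)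
    (hcont : ContinuousOn f' (cube d))
    (xh x : E) (hxh : xh ∈ K) (hx : x ∈ K) :
    ((1 - ν)/4) * f x - f ((2:ℝ)⁻¹ • (xh + u)) ≤
      inner ℝ (∫ z in (0:ℝ)..1, (1 / (8 * (1 - z / 2) ^ 3)) • f' ((z / 2) • (xh - u) + u))
        (x - xh) := by
  set w : E := (2:ℝ)⁻¹ • (xh - u) with hw
  set p : ℝ → E := fun z => u + z • w with hp
  have hrepr : ∀ z : ℝ, (z / 2) • (xh - u) + u = p z := by
    intro z; simp only [hp, hw, smul_smul]; module
  have hpK : ∀ z ∈ Icc (0:ℝ) 1, p z ∈ K := by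
    intro z hz
    have h2 : p z = (1 - z/2) • u + (z/2) • xh := by
      simp only [hp, hw, smul_smul]; module
    rw [h2]
    exact hKcvx hu hxh (by linarith [hz.2]) (by linarith [hz.1]) (by ring)
  have hpcube : ∀ z ∈ Icc (0:ℝ) 1, p z ∈ cube d := fun z hz => hKX (hpK z hz)
  have hpath := fun z hz => hasDerivWithinAt_path f f' hgrad u w (Icc (0:ℝ) 1) hpcube z hz
  have hxcube : x ∈ cube d := hKX hx
  have hucube : u ∈ cube d := hKX hu
  have hpcont : Continuous p := continuous_const.add (continuous_id.smul continuous_const)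
  have hf'pcont : ContinuousOn (fun z => f' (p z)) (Icc (0:ℝ) 1) :=
    hcont.comp hpcont.continuousOn hpcube
  have hhcont : ContinuousOn (fun z => f (p z)) (Icc (0:ℝ) 1) :=
    fun z hz => (hpath z hz).continuousWithinAt
  have hcz : ∀ z ∈ Icc (0:ℝ) 1, (0:ℝ) < 1 - z/2 := fun z hz => by linarith [hz.2]
  have hwcont : ContinuousOn (fun z => 1 / (8 * (1 - z/2)^3)) (Icc (0:ℝ) 1) := by
    apply ContinuousOn.div continuousOn_const (by fun_prop)
    intro z hz
    have := hcz z hz; positivity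
  have hGcont : ContinuousOn (fun z => (1 / (8 * (1 - z/2)^3)) • f' (p z)) (Icc (0:ℝ) 1) :=
    hwcont.smul hf'pcont
  have hGint : IntervalIntegrable (fun z => (1 / (8 * (1 - z/2)^3)) • f' (p z)) volume 0 1 := by
    apply ContinuousOn.intervalIntegrable
    rwa [Set.uIcc_of_le (by norm_num : (0:ℝ) ≤ 1)]
  have hint_eq : (∫ z in (0:ℝ)..1, (1 / (8 * (1 - z / 2) ^ 3)) • f' ((z / 2) • (xh - u) + u))
      = ∫ z in (0:ℝ)..1, (1 / (8 * (1 - z/2)^3)) • f' (p z) := by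
    congr 1; funext z; rw [hrepr]
  rw [hint_eq]
  -- swap inner and integral
  have hswap : (inner ℝ (∫ z in (0:ℝ)..1, (1 / (8 * (1 - z/2)^3)) • f' (p z)) (x - xh) : ℝ)
      = ∫ z in (0:ℝ)..1, (1 / (8 * (1 - z/2)^3)) * (inner ℝ (f' (p z)) (x - xh) : ℝ) := by
    have hswap' := ContinuousLinearMap.intervalIntegral_comp_comm (innerSL ℝ (x - xh)) hGint
    have h1 : (inner ℝ (∫ z in (0:ℝ)..1, (1 / (8 * (1 - z/2)^3)) • f' (p z)) (x - xh) : ℝ)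
        = (innerSL ℝ (x - xh)) (∫ z in (0:ℝ)..1, (1 / (8 * (1 - z/2)^3)) • f' (p z)) := by
      rw [innerSL_apply_apply, real_inner_comm]
    rw [h1, ← hswap']
    congr 1; funext z
    rw [innerSL_apply_apply, real_inner_smul_right, real_inner_comm]
  rw [hswap]
  -- pointwise lower bound
  set D : ℝ → ℝ := fun z => f (p z) / (4 * (1 - z/2)^3)
      + (inner ℝ (f' (p z)) w : ℝ) / (4 * (1 - z/2)^2) with hD
  set LB : ℝ → ℝ := fun z => ((1 - ν) * f x) * (1 / (8 * (1 - z/2)^2)) - D z with hLB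
  have hpoint : ∀ z ∈ Icc (0:ℝ) 1,
      LB z ≤ (1 / (8 * (1 - z/2)^3)) * (inner ℝ (f' (p z)) (x - xh) : ℝ) := by
    intro z hz
    have hc := hcz z hz
    have hpz := hpcube z hz
    -- decomposition of x - xh
    have hdecomp : x - xh = (x - p z) - (2 * (1 - z/2)) • w := by
      simp only [hp, hw]; module
    have hinner1 : (inner ℝ (f' (p z)) (x - xh) : ℝ)
        = inner ℝ (f' (p z)) (x - p z) - (2 * (1 - z/2)) * inner ℝ (f' (p z)) w := by
      rw [hdecomp, inner_sub_right, real_inner_smul_right]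
    -- cross bound
    have hcross := cross_bound f f' hsub hgrad (p z) x hpz hxcube
    have hinf : 0 ≤ f ((WithLp.toLp 2 (fun i => min (p z i) (x i)) : EuclideanSpace ℝ (Fin d))) := by
      apply hnonneg
      intro i
      exact ⟨le_min (hpz i).1 (hxcube i).1, min_le_of_left_le (hpz i).2⟩
    -- sup lower bound
    set M : ℝ := 1 - (1 - z/2) * (1 - ν) with hM
    have hM0 : 0 ≤ M := by
      have h1 : (1 - z/2) * (1 - ν) ≤ 1 * 1 := by
        apply mul_le_mul (by linarith [hz.1]) (by linarith) (by linarith) (by norm_num)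
      rw [hM]; linarith
    have hM1 : M ≤ 1 := by
      have h1 : 0 ≤ (1 - z/2) * (1 - ν) := mul_nonneg (by linarith) (by linarith)
      rw [hM]; linarith
    have haM : ∀ i, p z i ≤ M := by
      intro i
      have hpi : p z i = u i + z * (2⁻¹ * (xh i - u i)) := by
        simp only [hp, hw, PiLp.add_apply, PiLp.smul_apply, PiLp.sub_apply, smul_eq_mul]
      rw [hpi, hM]
      have h1 := huν i
      have h2 := (hKX hxh i).2
      have h3 := (hucube i).1
      have h4 := (hucube i).2
      nlinarith [hz.1, hz.2]
    have hsup := sup_lower f f' hsub hgrad hnonneg (p z) x hpz hxcube M hM0 hM1 haM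
    have h1M : 1 - M = (1 - z/2) * (1 - ν) := by rw [hM]; ring
    rw [h1M] at hsup
    -- combine
    have hcomb : (1 - z/2) * (1 - ν) * f x - 2 * f (p z)
        - (2 * (1 - z/2)) * (inner ℝ (f' (p z)) w : ℝ) ≤ (inner ℝ (f' (p z)) (x - xh) : ℝ) := by
      rw [hinner1]; linarith
    have hwf : (0:ℝ) < 1 / (8 * (1 - z/2)^3) := by positivity
    have := mul_le_mul_of_nonneg_left hcomb hwf.le
    calc LB z = (1 / (8 * (1 - z/2)^3)) * ((1 - z/2) * (1 - ν) * f x - 2 * f (p z)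
        - (2 * (1 - z/2)) * (inner ℝ (f' (p z)) w : ℝ)) :=
          lb_eq (1 - z/2) (f (p z)) (inner ℝ (f' (p z)) w : ℝ) (f x) ν (ne_of_gt hc)
      _ ≤ _ := this
  -- integrability of both sides
  have hne2 : ∀ z ∈ Icc (0:ℝ) 1, (4 * (1 - z/2)^2 : ℝ) ≠ 0 := by
    intro z hz; have := hcz z hz; positivity
  have hne3 : ∀ z ∈ Icc (0:ℝ) 1, (4 * (1 - z/2)^3 : ℝ) ≠ 0 := by
    intro z hz; have := hcz z hz; positivity
  have hinnercont : ContinuousOn (fun z => (inner ℝ (f' (p z)) w : ℝ)) (Icc (0:ℝ) 1) :=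
    ContinuousOn.inner hf'pcont continuousOn_const
  have hDcont : ContinuousOn D (Icc (0:ℝ) 1) := by
    apply ContinuousOn.add
    · exact ContinuousOn.div hhcont (by fun_prop) hne3
    · exact ContinuousOn.div hinnercont (by fun_prop) hne2
  have hLBcont : ContinuousOn LB (Icc (0:ℝ) 1) := by
    apply ContinuousOn.sub _ hDcont
    apply ContinuousOn.mul continuousOn_const
    exact ContinuousOn.div continuousOn_const (by fun_prop)
      (fun z hz => by have := hcz z hz; positivity)
  have hLBint : IntervalIntegrable LB volume 0 1 := by
    apply ContinuousOn.intervalIntegrable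
    rwa [Set.uIcc_of_le (by norm_num : (0:ℝ) ≤ 1)]
  have hAcont : ContinuousOn
      (fun z => (1 / (8 * (1 - z/2)^3)) * (inner ℝ (f' (p z)) (x - xh) : ℝ)) (Icc (0:ℝ) 1) :=
    hwcont.mul (ContinuousOn.inner hf'pcont continuousOn_const)
  have hAint : IntervalIntegrable
      (fun z => (1 / (8 * (1 - z/2)^3)) * (inner ℝ (f' (p z)) (x - xh) : ℝ)) volume 0 1 := by
    apply ContinuousOn.intervalIntegrable
    rwa [Set.uIcc_of_le (by norm_num : (0:ℝ) ≤ 1)]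
  have hmono := intervalIntegral.integral_mono_on (by norm_num : (0:ℝ) ≤ 1) hLBint hAint hpoint
  -- compute ∫ LB
  have hI1cont : ContinuousOn (fun z => 1 / (8 * (1 - z/2)^2)) (Icc (0:ℝ) 1) :=
    ContinuousOn.div continuousOn_const (by fun_prop)
      (fun z hz => by have := hcz z hz; positivity)
  have hI1int : IntervalIntegrable (fun z => 1 / (8 * (1 - z/2)^2)) volume 0 1 := by
    apply ContinuousOn.intervalIntegrable
    rwa [Set.uIcc_of_le (by norm_num : (0:ℝ) ≤ 1)]
  have hI1 : (∫ z in (0:ℝ)..1, 1 / (8 * (1 - z/2)^2)) = 1/4 := by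
    have hF : ∀ z ∈ Set.uIcc (0:ℝ) 1, HasDerivAt (fun z : ℝ => (4 * (1 - z/2))⁻¹)
        (1 / (8 * (1 - z/2)^2)) z := by
      intro z hz
      rw [Set.uIcc_of_le (by norm_num : (0:ℝ) ≤ 1)] at hz
      have hcne : (1 - z/2 : ℝ) ≠ 0 := by intro h; have := hz.2; linarith
      have hne : (4 * (1 - z/2) : ℝ) ≠ 0 := by
        intro h; apply hcne; linarith
      have hlin : HasDerivAt (fun z : ℝ => 1 - z/2) (-(1/2)) z := by
        simpa using ((hasDerivAt_id z).div_const (2:ℝ)).const_sub 1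
      have h1 := hlin.const_mul (4:ℝ)
      have h2 := h1.inv hne
      exact h2.congr_deriv (I1val (1 - z/2) hcne).symm
    rw [intervalIntegral.integral_eq_sub_of_hasDerivAt hF hI1int]
    norm_num
  have hfirst : (∫ z in (0:ℝ)..1, ((1 - ν) * f x) * (1 / (8 * (1 - z/2)^2)))
      = ((1 - ν) * f x) * (1/4) := by
    rw [intervalIntegral.integral_const_mul, hI1]
  have hfirstint : IntervalIntegrable (fun z => ((1 - ν) * f x) * (1 / (8 * (1 - z/2)^2)))
      volume 0 1 := by
    apply ContinuousOn.intervalIntegrable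
    rw [Set.uIcc_of_le (by norm_num : (0:ℝ) ≤ 1)]
    exact continuousOn_const.mul hI1cont
  have hDint : IntervalIntegrable D volume 0 1 := by
    apply ContinuousOn.intervalIntegrable
    rwa [Set.uIcc_of_le (by norm_num : (0:ℝ) ≤ 1)]
  -- FTC for D
  set H : ℝ → ℝ := fun z => f (p z) * (4 * (1 - z/2)^2)⁻¹ with hHdef
  have hHcont : ContinuousOn H (Icc (0:ℝ) 1) := by
    apply hhcont.mul
    exact ContinuousOn.inv₀ (by fun_prop) hne2
  have hHderiv : ∀ z ∈ Ioo (0:ℝ) 1, HasDerivWithinAt H (D z) (Ioi z) z := by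
    intro z hz
    have hzI : z ∈ Icc (0:ℝ) 1 := Ioo_subset_Icc_self hz
    have hc := hcz z hzI
    have hh : HasDerivAt (fun z => f (p z)) (inner ℝ (f' (p z)) w : ℝ) z :=
      (hpath z hzI).hasDerivAt (Icc_mem_nhds hz.1 hz.2)
    have hlin : HasDerivAt (fun z : ℝ => 1 - z/2) (-(1/2)) z := by
      simpa using ((hasDerivAt_id z).div_const (2:ℝ)).const_sub 1
    have hpow := hlin.pow 2
    have hr := hpow.const_mul (4:ℝ)
    have hne : (4 * (1 - z/2)^2 : ℝ) ≠ 0 := hne2 z hzI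
    have hq := hr.inv hne
    have hH := hh.mul hq
    apply HasDerivAt.hasDerivWithinAt
    exact hH.congr_deriv (Dval (1 - z/2) (f (p z)) (inner ℝ (f' (p z)) w : ℝ) (ne_of_gt hc)).symm
  have hDftc : (∫ z in (0:ℝ)..1, D z) = H 1 - H 0 :=
    intervalIntegral.integral_eq_sub_of_hasDeriv_right_of_le (by norm_num) hHcont hHderiv hDint
  have hH1 : H 1 = f ((2:ℝ)⁻¹ • (xh + u)) := by
    have hp1 : p 1 = (2:ℝ)⁻¹ • (xh + u) := by
      simp only [hp, hw]; module
    rw [hHdef]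
    simp only [hp1]
    norm_num
  have hH0 : H 0 = f u * 4⁻¹ := by
    have hp0 : p 0 = u := by simp [hp]
    rw [hHdef]
    simp only [hp0]
    norm_num
  have hLBeq : (∫ z in (0:ℝ)..1, LB z)
      = ((1 - ν) * f x) * (1/4) - (H 1 - H 0) := by
    rw [hLB]
    rw [intervalIntegral.integral_sub hfirstint hDint, hfirst, hDftc]
  rw [hLBeq] at hmono
  have hfu : 0 ≤ f u := hnonneg u hucube
  rw [hH1, hH0] at hmono
  linarith


end Aux

set_option maxHeartbeats 1600000 in
/-- deterministic core of Theorem 2: the smooth-case version of the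
reduction based on the boosting technique, with a squared-consensus-error term. -/
theorem reduction_boosting_nonmonotone_smooth
    (d n T : ℕ) (hd : 1 ≤ d) (hn : 1 ≤ n) (hT : 1 ≤ T)
    (K : Set (EuclideanSpace ℝ (Fin d))) (hKcvx : Convex ℝ K) (hKX : K ⊆ cube d)
    (u : EuclideanSpace ℝ (Fin d)) (hu : u ∈ K)
    (α ν : ℝ) (hν : ν = ⨆ i, |u i|) (hα : α = (1 - ν) / 4)
    (β : ℝ)
    (f : Fin T → Fin n → EuclideanSpace ℝ (Fin d) → ℝ)
    (f' : Fin T → Fin n → EuclideanSpace ℝ (Fin d) → EuclideanSpace ℝ (Fin d))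
    (hsub : ∀ t j, DRSubmodularOn d (f t j))
    (hnonneg : ∀ t j, ∀ x ∈ cube d, 0 ≤ f t j x)
    (hgrad : ∀ t j, ∀ x ∈ cube d, HasGradientWithinAt (f t j) (f' t j x) (cube d) x)
    (hcont : ∀ t j, ContinuousOn (f' t j) (cube d))
    (hlip : ∀ t j, ∀ x ∈ cube d, ∀ y ∈ cube d, ‖f' t j x - f' t j y‖ ≤ β * ‖x - y‖)
    (xhat : Fin T → Fin n → EuclideanSpace ℝ (Fin d))
    (hxhat : ∀ t j, xhat t j ∈ K)
    (xdec : Fin T → Fin n → EuclideanSpace ℝ (Fin d))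
    (hxdec : ∀ t j, xdec t j = (2:ℝ)⁻¹ • (xhat t j + u))
    (g : Fin T → Fin n → EuclideanSpace ℝ (Fin d) → EuclideanSpace ℝ (Fin d))
    (hg : ∀ t j, ∀ x ∈ K, g t j x =
      ∫ z in (0:ℝ)..1, (1 / (8 * (1 - z / 2) ^ 3)) • f' t j ((z / 2) • (x - u) + u)) :
    ∀ i : Fin n, ∀ x ∈ K,
      α * (∑ t, ∑ j, f t j x) - ∑ t, ∑ j, f t j (xdec t i) ≤
        (∑ t, ∑ j, (inner ℝ (g t j (xhat t j)) (x - xhat t i) : ℝ)) +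
          (∑ t, ∑ j,
            (inner ℝ ((2:ℝ)⁻¹ • f' t j (xdec t j) - g t j (xhat t j))
              (xhat t j - xhat t i) : ℝ)) +
          (β / 8) * ∑ t, ∑ j, ‖xhat t i - xhat t j‖ ^ 2 := by
  intro i x hx
  have hucube : u ∈ cube d := hKX hu
  haveI : Nonempty (Fin d) := ⟨⟨0, hd⟩⟩
  have hbdd : BddAbove (Set.range fun i => |u i|) := Set.Finite.bddAbove (Set.finite_range _)
  have hν1 : ν ≤ 1 := by
    rw [hν]
    exact ciSup_le fun i => abs_le.2 ⟨by linarith [(hucube i).1], (hucube i).2⟩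
  have huν : ∀ i, u i ≤ ν := fun i => by
    rw [hν]; exact le_trans (le_abs_self _) (le_ciSup hbdd i)
  have hν0 : 0 ≤ ν := le_trans (abs_nonneg (u ⟨0, hd⟩)) (by rw [hν]; exact le_ciSup hbdd _)
  have hβ0 : 0 ≤ β := by
    have h0 : (0 : EuclideanSpace ℝ (Fin d)) ∈ cube d := by
      intro i; simp
    have he : EuclideanSpace.single (⟨0, hd⟩ : Fin d) (1:ℝ) ∈ cube d := by
      intro i
      rw [show EuclideanSpace.single (⟨0, hd⟩ : Fin d) (1:ℝ) i
        = (if i = ⟨0, hd⟩ then (1:ℝ) else 0) from EuclideanSpace.single_apply _ _ _]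
      split <;> norm_num
    have := hlip ⟨0, hT⟩ ⟨0, hn⟩ _ h0 _ he
    have hnorm : ‖(0 : EuclideanSpace ℝ (Fin d)) - EuclideanSpace.single (⟨0, hd⟩ : Fin d) (1:ℝ)‖
        = 1 := by
      rw [zero_sub, norm_neg, EuclideanSpace.norm_single]
      norm_num
    rw [hnorm, mul_one] at this
    exact le_trans (norm_nonneg _) this
  have hdecK : ∀ t j, xdec t j ∈ K := by
    intro t j
    rw [hxdec, smul_add]
    exact hKcvx (hxhat t j) hu (by norm_num) (by norm_num) (by norm_num)
  have key : ∀ t j, α * f t j x - f t j (xdec t i) ≤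
      (inner ℝ (g t j (xhat t j)) (x - xhat t i) : ℝ)
      + (inner ℝ ((2:ℝ)⁻¹ • f' t j (xdec t j) - g t j (xhat t j)) (xhat t j - xhat t i) : ℝ)
      + (β/8) * ‖xhat t i - xhat t j‖^2 := by
    intro t j
    have hb := boosting K hKcvx hKX u hu ν hν0 hν1 huν (f t j) (f' t j) (hsub t j)
      (hnonneg t j) (hgrad t j) (hcont t j) (xhat t j) x (hxhat t j) hx
    rw [← hg t j (xhat t j) (hxhat t j), ← hxdec t j] at hb
    have hs := smooth_lower (f t j) (f' t j) β (hgrad t j) (hcont t j) (hlip t j)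
      (xdec t j) (xdec t i) (hKX (hdecK t j)) (hKX (hdecK t i))
    have hvec : xdec t i - xdec t j = (2:ℝ)⁻¹ • (xhat t i - xhat t j) := by
      rw [hxdec, hxdec]; module
    have hnormsq : ‖xdec t i - xdec t j‖^2 = (1/4) * ‖xhat t i - xhat t j‖^2 := by
      rw [hvec, norm_smul, Real.norm_eq_abs, abs_of_pos (by norm_num : (0:ℝ) < 2⁻¹)]
      ring
    have hinner2 : (inner ℝ (f' t j (xdec t j)) (xdec t i - xdec t j) : ℝ)
        = - (inner ℝ ((2:ℝ)⁻¹ • f' t j (xdec t j)) (xhat t j - xhat t i) : ℝ) := by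
      rw [hvec, real_inner_smul_right, real_inner_smul_left]
      rw [show xhat t j - xhat t i = -(xhat t i - xhat t j) from (neg_sub _ _).symm]
      rw [inner_neg_right]
      ring
    have hrearr : (inner ℝ (g t j (xhat t j)) (x - xhat t j) : ℝ)
        = (inner ℝ (g t j (xhat t j)) (x - xhat t i) : ℝ)
          - (inner ℝ (g t j (xhat t j)) (xhat t j - xhat t i) : ℝ) := by
      rw [← inner_sub_right]
      congr 1
      abel
    have hsplit : (inner ℝ ((2:ℝ)⁻¹ • f' t j (xdec t j) - g t j (xhat t j))
        (xhat t j - xhat t i) : ℝ)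
        = (inner ℝ ((2:ℝ)⁻¹ • f' t j (xdec t j)) (xhat t j - xhat t i) : ℝ)
          - (inner ℝ (g t j (xhat t j)) (xhat t j - xhat t i) : ℝ) := inner_sub_left _ _ _
    rw [hα]
    rw [hnormsq, hinner2] at hs
    rw [hrearr] at hb
    rw [hsplit]
    linarith
  calc α * (∑ t, ∑ j, f t j x) - ∑ t, ∑ j, f t j (xdec t i)
      = ∑ t, ∑ j, (α * f t j x - f t j (xdec t i)) := by
        simp only [Finset.mul_sum, ← Finset.sum_sub_distrib]
    _ ≤ ∑ t, ∑ j, ((inner ℝ (g t j (xhat t j)) (x - xhat t i) : ℝ)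
        + (inner ℝ ((2:ℝ)⁻¹ • f' t j (xdec t j) - g t j (xhat t j)) (xhat t j - xhat t i) : ℝ)
        + (β/8) * ‖xhat t i - xhat t j‖^2) :=
        Finset.sum_le_sum fun t _ => Finset.sum_le_sum fun j _ => key t j
    _ = _ := by
        simp only [Finset.sum_add_distrib, ← Finset.mul_sum]
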